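/- arXiv:1804.01411 — 2 statements merged into one kernel-verified Lean document; each statement's English description precedes it below -/
import Mathlib

section
/- For the van der Waals pressure p(τ) = RT/(τ−b) − a/τ² with constants a,b,R > 0, if the temperature satisfies T > 8a/(27Rb), then p is strictly decreasing on (b, ∞). -/
/-- For the van der Waals pressure `p τ = R*T/(τ-b) - a/τ²` with `a, b, R > 0`,
if `T > 8a/(27Rb)` then `p` is strictly decreasing on `(b, ∞)`. -/
theorem vdw_strictAnti_of_supercritical
    (a b R T : ℝ) (ha : 0 < a) (hb : 0 < b) (hR : 0 < R)
    (hT : T > 8 * a / (27 * R * b)) :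
    StrictAntiOn (fun τ : ℝ => R * T / (τ - b) - a / τ ^ 2) (Set.Ioi b) := by
  have hRT : 27 * b * (R * T) > 8 * a := by
    have h27 : (0:ℝ) < 27 * R * b := by positivity
    rw [gt_iff_lt, div_lt_iff₀ h27] at hT
    nlinarith
  apply strictAntiOn_of_deriv_neg (convex_Ioi b)
  · apply ContinuousOn.sub
    · apply ContinuousOn.div continuousOn_const (by fun_prop)
      intro x hx
      have : b < x := hx
      intro h; linarith [sub_eq_zero.mp h]
    · apply ContinuousOn.div continuousOn_const (by fun_prop)
      intro x hx
      have hbx : b < x := hx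
      have hx0 : 0 < x := hb.trans hbx
      positivity
  · intro x hx
    rw [interior_Ioi] at hx
    have hbx : b < x := hx
    have hx0 : 0 < x := hb.trans hbx
    have hxb : 0 < x - b := by linarith
    have h1 : HasDerivAt (fun τ : ℝ => R * T / (τ - b))
        ((0 * (x - b) - R * T * 1) / (x - b) ^ 2) x :=
      (hasDerivAt_const x (R * T)).div ((hasDerivAt_id x).sub_const b) (ne_of_gt hxb)
    have h2 : HasDerivAt (fun τ : ℝ => a / τ ^ 2)
        ((0 * x ^ 2 - a * (2 * x ^ 1)) / (x ^ 2) ^ 2) x :=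
      (hasDerivAt_const x a).div (hasDerivAt_pow 2 x) (by positivity)
    have hd : deriv (fun τ : ℝ => R * T / (τ - b) - a / τ ^ 2) x = _ := (h1.sub h2).deriv
    rw [hd]
    rw [sub_neg]
    rw [div_lt_div_iff₀ (by positivity) (by positivity)]
    have h8 : 54 * b * (x - b) ^ 2 ≤ 8 * x ^ 3 := by
      nlinarith [mul_nonneg (sq_nonneg (x - 3 * b)) (show (0:ℝ) ≤ 4 * x - 3 * b by linarith)]
    have hkey : 54 * a * b * (x - b) ^ 2 ≤ 8 * a * x ^ 3 := by nlinarith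
    have hx4 : (0:ℝ) < x ^ 4 := by positivity
    nlinarith [mul_lt_mul_of_pos_right hRT hx4, mul_le_mul_of_nonneg_left hkey hx0.le]
end

section
/- For the van der Waals pressure p(τ) = RT/(τ−b) − a/τ² with a,b,R > 0 and temperature T < 8a/(27Rb), there exist b < τ₁ < τ₂ such that p'(τ) > 0 for all τ ∈ (τ₁, τ₂); i.e., p is not monotone on (b,∞). -/
/-- For the van der Waals pressure with `T < 8a/(27Rb)` there is an interval
`(τ₁, τ₂) ⊆ (b, ∞)` on which `p' > 0`; in particular `p` is not monotone on `(b, ∞)`. -/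
theorem vdw_not_monotone_of_subcritical
    (a b R T : ℝ) (ha : 0 < a) (hb : 0 < b) (hR : 0 < R) (hTpos : 0 < T)
    (hT : T < 8 * a / (27 * R * b)) :
    ∃ τ₁ τ₂ : ℝ, b < τ₁ ∧ τ₁ < τ₂ ∧
      ∀ τ ∈ Set.Ioo τ₁ τ₂,
        0 < deriv (fun τ : ℝ => R * T / (τ - b) - a / τ ^ 2) τ := by
  set g : ℝ → ℝ := fun τ => 2 * a / τ ^ 3 - R * T / (τ - b) ^ 2 with hg
  -- derivative formula for τ > b
  have hderiv : ∀ τ : ℝ, b < τ →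
      deriv (fun τ : ℝ => R * T / (τ - b) - a / τ ^ 2) τ = g τ := by
    intro τ hτ
    have hτ0 : τ ≠ 0 := by nlinarith
    have hτb : τ - b ≠ 0 := by intro h; nlinarith
    have h1 : HasDerivAt (fun τ : ℝ => τ - b) 1 τ := (hasDerivAt_id τ).sub_const b
    have h2 : HasDerivAt (fun τ : ℝ => R * T / (τ - b))
        ((0 * (τ - b) - R * T * 1) / (τ - b) ^ 2) τ :=
      (hasDerivAt_const τ (R * T)).div h1 hτb
    have h3 : HasDerivAt (fun τ : ℝ => τ ^ 2) (2 * τ ^ 1) τ := by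
      simpa using hasDerivAt_pow 2 τ
    have h4 : HasDerivAt (fun τ : ℝ => a / τ ^ 2)
        ((0 * τ ^ 2 - a * (2 * τ ^ 1)) / (τ ^ 2) ^ 2) τ :=
      (hasDerivAt_const τ a).div h3 (pow_ne_zero 2 hτ0)
    have h5 : deriv (fun τ : ℝ => R * T / (τ - b) - a / τ ^ 2) τ = _ := (h2.sub h4).deriv
    rw [h5, hg]
    field_simp
    ring
  -- g is positive at 3b
  have h3b : b < 3 * b := by nlinarith
  have hpos : 0 < g (3 * b) := by
    have hRT : 27 * R * b * T < 8 * a := by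
      have h27 : 0 < 27 * R * b := by positivity
      calc 27 * R * b * T < 27 * R * b * (8 * a / (27 * R * b)) := by
            exact mul_lt_mul_of_pos_left hT h27
        _ = 8 * a := by field_simp
    have e1 : g (3 * b) = 2 * a / (27 * b ^ 3) - R * T / (4 * b ^ 2) := by
      rw [hg]; ring_nf
    rw [e1, sub_pos, div_lt_div_iff₀ (by positivity) (by positivity)]
    nlinarith [mul_lt_mul_of_pos_right hRT (mul_pos hb hb)]
  -- continuity of g at 3b
  have hc : ContinuousAt g (3 * b) := by
    apply ContinuousAt.sub
    · exact continuousAt_const.div (continuousAt_id.pow 3) (by positivity)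
    · exact continuousAt_const.div ((continuousAt_id.sub continuousAt_const).pow 2)
        (by nlinarith [sq_nonneg (2 * b)])
  have hnhds : g ⁻¹' Set.Ioi 0 ∈ nhds (3 * b) := hc (Ioi_mem_nhds hpos)
  obtain ⟨δ, hδ, hball⟩ := Metric.mem_nhds_iff.mp hnhds
  set ε := min (δ / 2) b with hε
  have hε0 : 0 < ε := lt_min (by linarith) hb
  refine ⟨3 * b - ε, 3 * b + ε, ?_, by linarith, ?_⟩
  · have : ε ≤ b := min_le_right _ _
    linarith
  · intro τ hτ
    obtain ⟨h1, h2⟩ := hτ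
    have hbt : b < τ := by
      have : ε ≤ b := min_le_right _ _
      linarith
    rw [hderiv τ hbt]
    have : τ ∈ Metric.ball (3 * b) δ := by
      rw [Metric.mem_ball, Real.dist_eq, abs_lt]
      have : ε ≤ δ / 2 := min_le_left _ _
      constructor <;> linarith
    exact hball this
end
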